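/- A permutation π of length n ≥ 1 avoids the mesh pattern (12, {(0,0),(0,1),(0,2)}) if and only if π(1) = n. Therefore the number of permutations of length n avoiding this pattern is (n−1)!. -/

import Mathlib

/-- 1-based position boundaries of an occurrence: `posOf x 0 = 0`,
`posOf x i = x_i` (1-based) for `1 ≤ i ≤ k`, and `posOf x i = n+1` for `i > k`. -/
def posOf {k n : ℕ} (x : Fin k → Fin n) (i : ℕ) : ℕ :=
  if h : 1 ≤ i ∧ i ≤ k then (x ⟨i - 1, by omega⟩ : ℕ) + 1
  else if i = 0 then 0 else n + 1

/-- 1-based value boundaries of an occurrence: `valOf τ x π 0 = 0`,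
`valOf τ x π j = y_j`, the `j`-th smallest of the values `π(x_1),…,π(x_k)`
(which equals `π(x_{τ⁻¹(j)})` for an occurrence of the classical pattern `τ`),
and `n+1` for `j > k`. -/
def valOf {k n : ℕ} (τ : Equiv.Perm (Fin k)) (x : Fin k → Fin n)
    (π : Equiv.Perm (Fin n)) (j : ℕ) : ℕ :=
  if h : 1 ≤ j ∧ j ≤ k then (π (x (τ.symm ⟨j - 1, by omega⟩)) : ℕ) + 1
  else if j = 0 then 0 else n + 1

/-- `π` (a permutation of length `n`, 0-indexed via `Fin n`) contains the mesh
pattern `(τ, R)`, where boxes in `R` are given with 0-based coordinates in `[0,k]²`.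
All positions/values are converted to 1-based via `+1`. -/
def MeshOccursIn {k n : ℕ} (τ : Equiv.Perm (Fin k)) (R : Set (ℕ × ℕ))
    (π : Equiv.Perm (Fin n)) : Prop :=
  ∃ x : Fin k → Fin n, StrictMono x ∧
    (∀ a b : Fin k, π (x a) < π (x b) ↔ τ a < τ b) ∧
    ∀ r ∈ R, ∀ z : Fin n,
      ¬ (posOf x r.1 < (z : ℕ) + 1 ∧ (z : ℕ) + 1 < posOf x (r.1 + 1) ∧
         valOf τ x π r.2 < (π z : ℕ) + 1 ∧ (π z : ℕ) + 1 < valOf τ x π (r.2 + 1))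

/-- `π` avoids the mesh pattern `(τ, R)`. -/
def MeshAvoids {k n : ℕ} (τ : Equiv.Perm (Fin k)) (R : Set (ℕ × ℕ))
    (π : Equiv.Perm (Fin n)) : Prop := ¬ MeshOccursIn τ R π

set_option maxHeartbeats 4000000
/-- A permutation of length `n ≥ 1` avoids `(12, {(0,0),(0,1),(0,2)})` iff it starts with `n`; hence `(n-1)!` avoiders. -/
theorem stmt2 (n : ℕ) (hn : 1 ≤ n) :
    (∀ π : Equiv.Perm (Fin n),
      MeshAvoids (1 : Equiv.Perm (Fin 2)) {(0,0),(0,1),(0,2)} π ↔ π ⟨0, by omega⟩ = ⟨n - 1, by omega⟩) ∧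
    Nat.card {π : Equiv.Perm (Fin n) //
      MeshAvoids (1 : Equiv.Perm (Fin 2)) {(0,0),(0,1),(0,2)} π} = (n - 1).factorial := by
  obtain ⟨m, rfl⟩ : ∃ m, n = m + 1 := ⟨n - 1, by omega⟩
  have htwo : ∀ a : Fin 2, a = 0 ∨ a = 1 := by decide
  have key : ∀ π : Equiv.Perm (Fin (m+1)),
      MeshAvoids (1 : Equiv.Perm (Fin 2)) {(0,0),(0,1),(0,2)} π ↔
        π ⟨0, by omega⟩ = ⟨m + 1 - 1, by omega⟩ := by
    intro π
    constructor
    · intro h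
      by_contra hne
      apply h
      set p : Fin (m+1) := π.symm ⟨m, by omega⟩ with hp
      have hπp : (π p : ℕ) = m := by
        rw [π.apply_symm_apply]
      have hne' : (π ⟨0, by omega⟩ : ℕ) ≠ m := by
        intro hc
        exact hne (Fin.ext (by simpa using hc))
      have hπ0 : (π ⟨0, by omega⟩ : ℕ) < m := by
        have h1 : (π ⟨0, by omega⟩ : ℕ) < m + 1 := (π ⟨0, by omega⟩).isLt
        omega
      have hlt : 0 < (p : ℕ) := by
        rcases Nat.eq_zero_or_pos (p : ℕ) with h' | h'
        · exfalso
          have : π p = π ⟨0, by omega⟩ := by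
            congr 1
            exact Fin.ext (by simpa using h')
          rw [Fin.ext_iff] at this
          omega
        · exact h'
      refine ⟨![⟨0, by omega⟩, p], ?_, ?_, ?_⟩
      · intro a b hab
        rcases htwo a with rfl | rfl <;> rcases htwo b with rfl | rfl
        · exact absurd hab (by decide)
        · rw [Matrix.cons_val_zero, Matrix.cons_val_one, Matrix.cons_val_zero, Fin.lt_def]
          simpa using hlt
        · exact absurd hab (by decide)
        · exact absurd hab (by decide)
      · intro a b
        have hL : π ((![⟨0, by omega⟩, p] : Fin 2 → Fin (m+1)) 0) <
            π ((![⟨0, by omega⟩, p] : Fin 2 → Fin (m+1)) 1) := by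
          rw [Matrix.cons_val_zero, Matrix.cons_val_one, Matrix.cons_val_zero, Fin.lt_def]
          omega
        rcases htwo a with rfl | rfl <;> rcases htwo b with rfl | rfl
        · simp
        · exact ⟨fun _ => by decide, fun _ => hL⟩
        · exact ⟨fun h' => absurd h' (not_lt.mpr hL.le), fun h' => absurd h' (by decide)⟩
        · simp
      · rintro r hr z
        have hr1 : r.1 = 0 := by
          rcases hr with h' | h' | h' <;> subst h' <;> rfl
        rw [hr1]
        simp only [posOf]
        norm_num
    · intro h hocc
      obtain ⟨x, hmono, hpat, hbox⟩ := hocc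
      have hval : (π (0 : Fin (m+1)) : ℕ) = m := by
        have h2 : (0 : Fin (m+1)) = ⟨0, by omega⟩ := rfl
        rw [h2, h]
        rfl
      have h01 : (π (x 0) : ℕ) < (π (x 1) : ℕ) := (hpat 0 1).mpr (by decide)
      have hx01 : (x 0 : ℕ) < (x 1 : ℕ) := hmono (show (0:Fin 2) < 1 by decide)
      have hπx1 : (π (x 1) : ℕ) < m := by
        have h1 : (π (x 1) : ℕ) < m + 1 := (π (x 1)).isLt
        rcases Nat.lt_or_ge (π (x 1) : ℕ) m with h' | h'
        · exact h'
        · exfalso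
          have heq : π (x 1) = π 0 := Fin.ext (by omega)
          have h2 := π.injective heq
          have h3 : (x 1 : ℕ) = 0 := by rw [h2]; rfl
          omega
      rcases Nat.eq_zero_or_pos ((x 0 : Fin (m+1)) : ℕ) with hx0 | hx0
      · have h2 : x 0 = 0 := Fin.ext (by simpa using hx0)
        rw [h2] at h01
        omega
      · have hb := hbox (0, 2) (by simp) 0
        apply hb
        refine ⟨?_, ?_, ?_, ?_⟩
        · simp [posOf]
        · simp only [posOf]
          norm_num
          rw [Fin.lt_def, Fin.val_zero]; omega
        · simp only [valOf]
          norm_num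
          show (π (x 1) : ℕ) < (π 0 : ℕ)
          omega
        · simp only [valOf]
          norm_num
          omega
  refine ⟨key, ?_⟩
  have e1 : {π : Equiv.Perm (Fin (m+1)) //
      MeshAvoids (1 : Equiv.Perm (Fin 2)) {(0,0),(0,1),(0,2)} π} ≃
      {π : Equiv.Perm (Fin (m+1)) // π ⟨0, by omega⟩ = ⟨m + 1 - 1, by omega⟩} :=
    Equiv.subtypeEquivRight key
  have e2 : {π : Equiv.Perm (Fin (m+1)) // π ⟨0, by omega⟩ = ⟨m + 1 - 1, by omega⟩} ≃
      Equiv.Perm (Fin m) := by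
    refine ⟨fun π => (Equiv.Perm.decomposeFin π.1).2,
      fun σ => ⟨Equiv.Perm.decomposeFin.symm (⟨m + 1 - 1, by omega⟩, σ), ?_⟩, ?_, ?_⟩
    · exact Equiv.Perm.decomposeFin_symm_apply_zero _ _
    · rintro ⟨π, hπ⟩
      apply Subtype.ext
      show Equiv.Perm.decomposeFin.symm (⟨m + 1 - 1, by omega⟩, (Equiv.Perm.decomposeFin π).2) = π
      have ha : (Equiv.Perm.decomposeFin π).1 = ⟨m + 1 - 1, by omega⟩ := by
        have h0 : (Equiv.Perm.decomposeFin π).1 = π 0 := by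
          conv_rhs => rw [← Equiv.symm_apply_apply Equiv.Perm.decomposeFin π]
          rw [Equiv.Perm.decomposeFin_symm_apply_zero]
        rw [h0]
        exact hπ
      rw [← ha]
      exact Equiv.symm_apply_apply _ _
    · intro σ
      simp
  rw [Nat.card_congr (e1.trans e2), Nat.card_eq_fintype_card, Fintype.card_perm,
    Fintype.card_fin]
  simp
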